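/- If A is a commutative ring containing the rational numbers (a Q-algebra) and M is an A-module, then for every n > 0 the Koszul complex Kos(M)_n and the De Rham complex DeRham(M)_n are homotopically trivial complexes of A-modules; in particular both are acyclic (exact). -/

import Mathlib

/-!
# STATEMENT 2

Let `A` be a commutative ring containing `ℚ` and `M` an `A`-module, `B = S·M` its symmetric
algebra (presented by `ι : M →ₗ[A] B` with the universal property, graded by
`𝒜 n = (range ι)^n`).  For `n > 0` the Koszul complex `Kos(M)ₙ` (the degree-`n` homogeneous
component of `(Ω^·_{B/A}, i_D)`, i.e. `0 → ΛⁿM → Λⁿ⁻¹M ⊗ M → ⋯ → M ⊗ Sⁿ⁻¹M → SⁿM → 0`)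
and the De Rham complex `DeRham(M)ₙ` (the degree-`n` component of `(Ω^·_{B/A}, d)`) are
homotopically trivial complexes of `A`-modules; in particular they are acyclic (exact).
-/

open scoped TensorProduct
open CategoryTheory

universe u

/-- `ι : M →ₗ[A] B` exhibits the commutative `A`-algebra `B` as the symmetric algebra of the
`A`-module `M`. -/
def IsSymmetricAlgebra' {A B M : Type u} [CommRing A] [CommRing B] [Algebra A B]
    [AddCommGroup M] [Module A M] (ι : M →ₗ[A] B) : Prop :=
  ∀ (C : Type u) [CommRing C] [Algebra A C] (f : M →ₗ[A] C),
    ∃! g : B →ₐ[A] C, ∀ m : M, g (ι m) = f m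

variable {A B M : Type u} [CommRing A] [CommRing B] [Algebra A B]
  [AddCommGroup M] [Module A M]

/-- The element `d c₁ ∧ ⋯ ∧ d c_p` of `Ω^p_{B/A} = ⋀^p_B Ω_{B/A}`. -/
noncomputable def wedgeD (p : ℕ) (c : Fin p → B) : (⋀[B]^p (Ω[B⁄A]) : Submodule B _) :=
  ⟨ExteriorAlgebra.ιMulti B p (fun i => KaehlerDifferential.D A B (c i)),
    ExteriorAlgebra.ιMulti_range B p (Set.mem_range_self _)⟩

/-- The degree-`m` homogeneous component of `Ω^p_{B/A}`. -/
noncomputable def kaehlerPowerPiece (𝒜 : ℕ → Submodule A B) (p m : ℕ) :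
    Submodule A (⋀[B]^p (Ω[B⁄A])) :=
  Submodule.span A {ω | ∃ (d : Fin (p + 1) → ℕ) (b : Fin (p + 1) → B),
    (∀ i, b i ∈ 𝒜 (d i)) ∧ (∑ i, d i) = m ∧
    (ω : ExteriorAlgebra B (Ω[B⁄A])) =
      b 0 • ExteriorAlgebra.ιMulti B p (fun j => KaehlerDifferential.D A B (b j.succ)) }

section complexes

variable (𝒜 : ℕ → Submodule A B)
  (iD : ∀ p : ℕ, (⋀[B]^(p + 1) (Ω[B⁄A])) →ₗ[B] (⋀[B]^p (Ω[B⁄A])))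
  (dEx : ∀ p : ℕ, (⋀[B]^p (Ω[B⁄A])) →ₗ[A] (⋀[B]^(p + 1) (Ω[B⁄A])))

/-- The Koszul complex `Kos(M)ₙ`: the degree-`n` homogeneous component of the complex
`(Ω^·_{B/A}, i_D)`, a chain complex of `A`-modules
`⋯ → [Ω^p_{B/A}]ₙ → [Ω^{p-1}_{B/A}]ₙ → ⋯ → [Ω_{B/A}]ₙ → [B]ₙ → 0`. -/
noncomputable def koszulComplexDeg (n : ℕ)
    (hiDsq : ∀ p, (iD p) ∘ₗ (iD (p + 1)) = 0)
    (hiDdeg : ∀ p m, ∀ ω ∈ kaehlerPowerPiece 𝒜 (p + 1) m,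
      ((iD p).restrictScalars A) ω ∈ kaehlerPowerPiece 𝒜 p m) :
    ChainComplex (ModuleCat A) ℕ :=
  ChainComplex.of (fun p => ModuleCat.of A (kaehlerPowerPiece 𝒜 p n))
    (fun p => ModuleCat.ofHom (LinearMap.restrict (((iD p).restrictScalars A)) (hiDdeg p n)))
    (fun p => by
      refine ModuleCat.hom_ext (LinearMap.ext fun x => Subtype.ext ?_)
      have h := LinearMap.congr_fun (hiDsq p) x.1
      exact h)

/-- The De Rham complex `DeRham(M)ₙ`: the degree-`n` homogeneous component of the complex
`(Ω^·_{B/A}, d)`, a cochain complex of `A`-modules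
`0 → [B]ₙ → [Ω_{B/A}]ₙ → ⋯ → [Ω^p_{B/A}]ₙ → ⋯`. -/
noncomputable def deRhamComplexDeg (n : ℕ)
    (hdExsq : ∀ p, (dEx (p + 1)) ∘ₗ (dEx p) = 0)
    (hdExdeg : ∀ p m, ∀ ω ∈ kaehlerPowerPiece 𝒜 p m,
      (dEx p) ω ∈ kaehlerPowerPiece 𝒜 (p + 1) m) :
    CochainComplex (ModuleCat A) ℕ :=
  CochainComplex.of (fun p => ModuleCat.of A (kaehlerPowerPiece 𝒜 p n))
    (fun p => ModuleCat.ofHom (LinearMap.restrict (dEx p) (hdExdeg p n)))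
    (fun p => by
      refine ModuleCat.hom_ext (LinearMap.ext fun x => Subtype.ext ?_)
      have h := LinearMap.congr_fun (hdExsq p) x.1
      exact h)

end complexes


set_option synthInstance.maxHeartbeats 1000000
set_option maxHeartbeats 1000000
set_option linter.unusedSectionVars false

lemma Dcons (p : ℕ) (a : B) (v : Fin p → B) :
    (fun i => KaehlerDifferential.D A B ((Fin.cons a v : Fin (p+1) → B) i)) =
      Fin.cons (KaehlerDifferential.D A B a) (fun i => KaehlerDifferential.D A B (v i)) := by
  funext i
  refine Fin.cases ?_ ?_ i <;> simp

lemma wedgeD_cons_mul (p : ℕ) (x y : B) (v : Fin p → B) :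
    wedgeD (A := A) (p + 1) (Fin.cons (x * y) v) =
      x • wedgeD (A := A) (p + 1) (Fin.cons y v) + y • wedgeD (A := A) (p + 1) (Fin.cons x v) := by
  refine Subtype.ext ?_
  show ExteriorAlgebra.ιMulti B (p+1) _ = x • ExteriorAlgebra.ιMulti B (p+1) _ +
    y • ExteriorAlgebra.ιMulti B (p+1) _
  rw [Dcons, Dcons, Dcons, Derivation.leibniz, ← AlternatingMap.coe_multilinearMap]
  rw [MultilinearMap.cons_add (ExteriorAlgebra.ιMulti B (p+1)).toMultilinearMap,
    MultilinearMap.cons_smul (ExteriorAlgebra.ιMulti B (p+1)).toMultilinearMap,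
    MultilinearMap.cons_smul (ExteriorAlgebra.ιMulti B (p+1)).toMultilinearMap]

lemma wedgeD_cons_perm (p : ℕ) (c : Fin (p + 1) → B) (j : Fin (p + 1)) :
    wedgeD (A := A) (p + 1) (Fin.cons (c j) (c ∘ j.succAbove)) =
      ((-1 : ℤ) ^ (j : ℕ)) • wedgeD (A := A) (p + 1) c := by
  refine Subtype.ext ?_
  show ExteriorAlgebra.ιMulti B (p+1) _ = ((-1:ℤ)^(j:ℕ)) • ExteriorAlgebra.ιMulti B (p+1) _
  have hfun : (Fin.cons (c j) (c ∘ j.succAbove) : Fin (p+1) → B) = c ∘ ⇑(j.cycleRange)⁻¹ := by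
    funext i
    refine Fin.cases ?_ ?_ i
    · simp [Equiv.Perm.inv_def, Fin.cycleRange_symm_zero]
    · intro k; simp [Equiv.Perm.inv_def, Fin.cycleRange_symm_succ]
  rw [hfun]
  have := AlternatingMap.map_perm (ExteriorAlgebra.ιMulti B (p+1))
    (fun i => KaehlerDifferential.D A B (c i)) (j.cycleRange)⁻¹
  have hsign : Equiv.Perm.sign (j.cycleRange)⁻¹ = (-1 : ℤˣ) ^ (j : ℕ) := by
    rw [Equiv.Perm.sign_inv, Fin.sign_cycleRange]
  rw [hsign] at this
  calc (ExteriorAlgebra.ιMulti B (p+1)) (fun i => KaehlerDifferential.D A B ((c ∘ ⇑(j.cycleRange)⁻¹) i))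
      = (ExteriorAlgebra.ιMulti B (p+1)) ((fun i => KaehlerDifferential.D A B (c i)) ∘ ⇑(j.cycleRange)⁻¹) := rfl
    _ = ((-1:ℤˣ)^(j:ℕ)) • (ExteriorAlgebra.ιMulti B (p+1)) (fun i => KaehlerDifferential.D A B (c i)) := this
    _ = ((-1:ℤ)^(j:ℕ)) • (ExteriorAlgebra.ιMulti B (p+1)) (fun i => KaehlerDifferential.D A B (c i)) := by
        simp [Units.smul_def]

lemma cons_comp_zero_succAbove (p : ℕ) (b₀ : B) (c : Fin (p + 1) → B) :
    (Fin.cons b₀ c : Fin (p+2) → B) ∘ (0 : Fin (p+2)).succAbove = c := by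
  funext k; simp

lemma cons_comp_succ_succAbove (p : ℕ) (b₀ : B) (c : Fin (p + 1) → B) (j : Fin (p + 1)) :
    (Fin.cons b₀ c : Fin (p+2) → B) ∘ (j.succ).succAbove =
      Fin.cons b₀ (c ∘ j.succAbove) := by
  funext k
  refine Fin.cases ?_ ?_ k
  · simp
  · intro i; simp [Fin.succ_succAbove_succ]

section cartan

variable (𝒜 : ℕ → Submodule A B)
  (δ : Derivation A B B) (hδ : ∀ n : ℕ, ∀ b ∈ 𝒜 n, δ b = n • b)
  (iD : ∀ p : ℕ, (⋀[B]^(p + 1) (Ω[B⁄A])) →ₗ[B] (⋀[B]^p (Ω[B⁄A])))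
  (hiD : ∀ (p : ℕ) (c : Fin (p + 1) → B),
      iD p (wedgeD (p + 1) c) =
        ∑ i : Fin (p + 1), ((-1 : ℤ) ^ (i : ℕ)) • (δ (c i) • wedgeD p (c ∘ i.succAbove)))
  (dEx : ∀ p : ℕ, (⋀[B]^p (Ω[B⁄A])) →ₗ[A] (⋀[B]^(p + 1) (Ω[B⁄A])))
  (hdEx : ∀ (p : ℕ) (b : B) (c : Fin p → B),
      dEx p (b • wedgeD p c) = wedgeD (p + 1) (Fin.cons b c))

include hδ hiD hdEx in
lemma genCartan (p : ℕ) (d : Fin (p + 2) → ℕ) (b : Fin (p + 2) → B)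
    (hb : ∀ i, b i ∈ 𝒜 (d i)) :
    dEx p (iD p (b 0 • wedgeD (p + 1) (fun j => b j.succ))) +
      iD (p + 1) (dEx (p + 1) (b 0 • wedgeD (p + 1) (fun j => b j.succ))) =
    (∑ i, d i) • (b 0 • wedgeD (p + 1) (fun j => b j.succ)) := by
  set c : Fin (p + 1) → B := fun j => b j.succ with hc
  set e : Fin (p + 1) → ℕ := fun j => d j.succ with he
  set W : (⋀[B]^(p+1) (Ω[B⁄A]) : Submodule B _) := wedgeD (p + 1) c with hW
  have hδc : ∀ j, δ (c j) = (e j : ℕ) • c j := fun j => hδ _ _ (hb j.succ)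
  have claimA : dEx p (iD p (b 0 • W)) =
      (∑ j : Fin (p+1), (e j) • (b 0 • W)) +
      ∑ j : Fin (p+1), ((-1:ℤ)^(j:ℕ)) • (e j) •
        ((c j) • wedgeD (p + 1) (Fin.cons (b 0) (c ∘ j.succAbove))) := by
    have h1 : iD p (b 0 • W) =
        ∑ j : Fin (p+1), ((-1:ℤ)^(j:ℕ)) • (e j) • ((b 0 * c j) • wedgeD p (c ∘ j.succAbove)) := by
      rw [map_smul, hW, hiD p c, Finset.smul_sum]
      refine Finset.sum_congr rfl fun j _ => ?_
      rw [hδc j]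
      rw [smul_comm (b 0) (((-1:ℤ)^(j:ℕ)))]
      congr 1
      rw [smul_assoc, smul_comm (b 0) (e j), smul_smul]
    rw [h1, map_sum]
    rw [← Finset.sum_add_distrib]
    refine Finset.sum_congr rfl fun j _ => ?_
    rw [map_zsmul, map_nsmul, hdEx p (b 0 * c j) (c ∘ j.succAbove),
      wedgeD_cons_mul, smul_add, smul_add]
    congr 1
    · rw [wedgeD_cons_perm p c j, ← hW]
      rw [smul_comm ((-1:ℤ)^(j:ℕ)) (e j), smul_comm ((-1:ℤ)^(j:ℕ)) (b 0), smul_smul,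
        ← pow_add, ← two_mul, pow_mul, neg_one_sq, one_pow, one_smul]
  have claimB : iD (p + 1) (dEx (p + 1) (b 0 • W)) =
      (d 0) • (b 0 • W) +
      ∑ j : Fin (p+1), (-(((-1:ℤ)^(j:ℕ)) • (e j) •
        ((c j) • wedgeD (p + 1) (Fin.cons (b 0) (c ∘ j.succAbove))))) := by
    rw [hW, hdEx (p + 1) (b 0) c, hiD (p + 1) (Fin.cons (b 0) c), Fin.sum_univ_succ]
    congr 1
    · rw [Fin.cons_zero, cons_comp_zero_succAbove, hδ _ _ (hb 0), Fin.val_zero, pow_zero, one_smul,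
        smul_assoc]
    · refine Finset.sum_congr rfl fun j _ => ?_
      rw [Fin.cons_succ, cons_comp_succ_succAbove, hδc j, Fin.val_succ, pow_succ',
        neg_one_mul, neg_smul]
      congr 2
      rw [smul_assoc]
  rw [claimA, claimB]
  rw [show ∀ (x y z w : (⋀[B]^(p+1) (Ω[B⁄A]) : Submodule B _)), x + y + (z + w) = (x + z) + (y + w)
    from fun x y z w => by abel]
  rw [← Finset.sum_add_distrib]
  simp only [add_neg_cancel, Finset.sum_const_zero, add_zero]
  rw [Fin.sum_univ_succ d, add_smul, Finset.sum_smul]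
  exact add_comm _ _

include hδ hiD hdEx in
lemma genCartan0 (d : Fin 1 → ℕ) (b : Fin 1 → B)
    (hb : ∀ i, b i ∈ 𝒜 (d i)) :
    iD 0 (dEx 0 (b 0 • wedgeD 0 (fun j => b j.succ))) =
      (∑ i, d i) • (b 0 • wedgeD 0 (fun j => b j.succ)) := by
  rw [hdEx 0 (b 0) (fun j => b j.succ), hiD 0, Fin.sum_univ_one, Fin.sum_univ_one,
    Fin.cons_zero, Fin.val_zero, pow_zero, one_smul, hδ _ _ (hb 0), smul_assoc]
  have h0 : ((Fin.cons (b 0) fun j => b j.succ) ∘ Fin.succAbove 0 : Fin 0 → B) =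
      fun j => b j.succ := funext fun i => i.elim0
  rw [h0]

include hδ hiD hdEx in
lemma cartan_piece (n p : ℕ) {ω : (⋀[B]^(p+1) (Ω[B⁄A]) : Submodule B _)}
    (hω : ω ∈ kaehlerPowerPiece 𝒜 (p + 1) n) :
    dEx p (iD p ω) + iD (p + 1) (dEx (p + 1) ω) = n • ω := by
  have := LinearMap.eqOn_span (R := A)
    (f := (dEx p ∘ₗ (iD p).restrictScalars A) + ((iD (p+1)).restrictScalars A ∘ₗ dEx (p+1)))
    (g := (n : ℕ) • LinearMap.id)
    (s := {ω : (⋀[B]^(p+1) (Ω[B⁄A]) : Submodule B _) | ∃ (d : Fin (p + 2) → ℕ) (b : Fin (p + 2) → B),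
      (∀ i, b i ∈ 𝒜 (d i)) ∧ (∑ i, d i) = n ∧
      (ω : ExteriorAlgebra B (Ω[B⁄A])) =
        b 0 • ExteriorAlgebra.ιMulti B (p+1) (fun j => KaehlerDifferential.D A B (b j.succ))})
    ?_ hω
  · exact this
  · rintro x ⟨d, b, hb, hsum, hx⟩
    have hxe : x = b 0 • wedgeD (p + 1) (fun j => b j.succ) := Subtype.ext hx
    show dEx p (iD p x) + iD (p+1) (dEx (p+1) x) = (n:ℕ) • x
    rw [hxe, ← hsum]
    exact genCartan 𝒜 δ hδ iD hiD dEx hdEx p d b hb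

include hδ hiD hdEx in
lemma cartan_piece0 (n : ℕ) {ω : (⋀[B]^0 (Ω[B⁄A]) : Submodule B _)}
    (hω : ω ∈ kaehlerPowerPiece 𝒜 0 n) :
    iD 0 (dEx 0 ω) = n • ω := by
  have := LinearMap.eqOn_span (R := A)
    (f := (iD 0).restrictScalars A ∘ₗ dEx 0)
    (g := (n : ℕ) • LinearMap.id)
    (s := {ω : (⋀[B]^0 (Ω[B⁄A]) : Submodule B _) | ∃ (d : Fin 1 → ℕ) (b : Fin 1 → B),
      (∀ i, b i ∈ 𝒜 (d i)) ∧ (∑ i, d i) = n ∧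
      (ω : ExteriorAlgebra B (Ω[B⁄A])) =
        b 0 • ExteriorAlgebra.ιMulti B 0 (fun j => KaehlerDifferential.D A B (b j.succ))})
    ?_ hω
  · exact this
  · rintro x ⟨d, b, hb, hsum, hx⟩
    have hxe : x = b 0 • wedgeD 0 (fun j => b j.succ) := Subtype.ext hx
    show iD 0 (dEx 0 x) = (n:ℕ) • x
    rw [hxe, ← hsum]
    exact genCartan0 𝒜 δ hδ iD hiD dEx hdEx d b hb

end cartan

/-- If `A` is a `ℚ`-algebra then, for every `n > 0`, the complexes
`Kos(M)ₙ` and `DeRham(M)ₙ` are homotopically trivial; in particular they are acyclic. -/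
theorem statement2 [Algebra ℚ A]
    (ι : M →ₗ[A] B) (𝒜 : ℕ → Submodule A B) [GradedAlgebra 𝒜]
    (hσ : IsSymmetricAlgebra' ι) (h𝒜 : ∀ n, 𝒜 n = LinearMap.range ι ^ n)
    -- the Euler derivation `D`, multiplication by `n` on `Sⁿ M` :
    (δ : Derivation A B B) (hδ : ∀ n : ℕ, ∀ b ∈ 𝒜 n, δ b = n • b)
    -- the Koszul differential: contraction with `D` :
    (iD : ∀ p : ℕ, (⋀[B]^(p + 1) (Ω[B⁄A])) →ₗ[B] (⋀[B]^p (Ω[B⁄A])))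
    (hiD : ∀ (p : ℕ) (c : Fin (p + 1) → B),
      iD p (wedgeD (p + 1) c) =
        ∑ i : Fin (p + 1), ((-1 : ℤ) ^ (i : ℕ)) • (δ (c i) • wedgeD p (c ∘ i.succAbove)))
    (hiDsq : ∀ p, (iD p) ∘ₗ (iD (p + 1)) = 0)
    (hiDdeg : ∀ p m, ∀ ω ∈ kaehlerPowerPiece 𝒜 (p + 1) m,
      ((iD p).restrictScalars A) ω ∈ kaehlerPowerPiece 𝒜 p m)
    -- the exterior (De Rham) differential :
    (dEx : ∀ p : ℕ, (⋀[B]^p (Ω[B⁄A])) →ₗ[A] (⋀[B]^(p + 1) (Ω[B⁄A])))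
    (hdEx : ∀ (p : ℕ) (b : B) (c : Fin p → B),
      dEx p (b • wedgeD p c) = wedgeD (p + 1) (Fin.cons b c))
    (hdExsq : ∀ p, (dEx (p + 1)) ∘ₗ (dEx p) = 0)
    (hdExdeg : ∀ p m, ∀ ω ∈ kaehlerPowerPiece 𝒜 p m,
      (dEx p) ω ∈ kaehlerPowerPiece 𝒜 (p + 1) m)
    (n : ℕ) (hn : 0 < n) :
    -- `Kos(M)ₙ` is homotopically trivial …
    Nonempty (Homotopy (𝟙 (koszulComplexDeg 𝒜 iD n hiDsq hiDdeg)) 0) ∧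
    -- … and `DeRham(M)ₙ` is homotopically trivial …
    Nonempty (Homotopy (𝟙 (deRhamComplexDeg 𝒜 dEx n hdExsq hdExdeg)) 0) ∧
    -- … ; in particular both complexes are acyclic (exact) :
    (∀ i : ℕ, (koszulComplexDeg 𝒜 iD n hiDsq hiDdeg).ExactAt i) ∧
    (∀ i : ℕ, (deRhamComplexDeg 𝒜 dEx n hdExsq hdExdeg).ExactAt i) := by
  classical
  have hnQ : (n : ℚ) ≠ 0 := Nat.cast_ne_zero.mpr hn.ne'
  set u : A := algebraMap ℚ A ((n : ℚ)⁻¹) with hu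
  have key : ∀ (V : Type u) [AddCommGroup V] [Module A V] (x : V), u • ((n : ℕ) • x) = x := by
    intro V _ _ x
    rw [← Nat.cast_smul_eq_nsmul A, smul_smul, hu, ← map_natCast (algebraMap ℚ A) n, ← map_mul,
      inv_mul_cancel₀ hnQ, map_one, one_smul]
  set K := koszulComplexDeg 𝒜 iD n hiDsq hiDdeg with hK
  set C := deRhamComplexDeg 𝒜 dEx n hdExsq hdExdeg with hC
  -- the homotopies
  let homK : ∀ i j, (ComplexShape.down ℕ).Rel j i → (K.X i ⟶ K.X j) := fun i j hij =>
    ((ModuleCat.ofHom (u • LinearMap.restrict (dEx i) (hdExdeg i n)) : K.X i ⟶ K.X (i+1)) ≫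
      eqToHom (congrArg K.X (hij : i + 1 = j)))
  let homC : ∀ i j, (ComplexShape.up ℕ).Rel j i → (C.X i ⟶ C.X j) := fun i j hij =>
    (eqToHom (congrArg C.X ((hij : j + 1 = i)).symm) ≫
      (ModuleCat.ofHom (u • LinearMap.restrict ((iD j).restrictScalars A) (hiDdeg j n)) : C.X (j+1) ⟶ C.X j))
  have homK_app : ∀ (i : ℕ) (h : (ComplexShape.down ℕ).Rel (i+1) i) (x : K.X i),
      homK i (i+1) h x = u • LinearMap.restrict (dEx i) (hdExdeg i n) x := by
    intro i h x
    show (eqToHom (congrArg K.X (h : i + 1 = i + 1))) _ = _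
    rw [eqToHom_refl]
    rfl
  have homC_app : ∀ (i : ℕ) (h : (ComplexShape.up ℕ).Rel i (i+1)) (x : C.X (i+1)),
      homC (i+1) i h x = u • LinearMap.restrict ((iD i).restrictScalars A) (hiDdeg i n) x := by
    intro i h x
    show (u • LinearMap.restrict ((iD i).restrictScalars A) (hiDdeg i n))
      ((eqToHom (congrArg C.X ((h : i + 1 = i + 1)).symm)) x) = _
    rw [eqToHom_refl]
    rfl
  have hdK : ∀ i : ℕ, K.d (i+1) i = ModuleCat.ofHom (LinearMap.restrict ((iD i).restrictScalars A) (hiDdeg i n)) :=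
    fun i => ChainComplex.of_d (fun p => ModuleCat.of A (kaehlerPowerPiece 𝒜 p n))
      (fun p => ModuleCat.ofHom (LinearMap.restrict ((iD p).restrictScalars A) (hiDdeg p n))) i
  have hdC : ∀ i : ℕ, C.d i (i+1) = ModuleCat.ofHom (LinearMap.restrict (dEx i) (hdExdeg i n)) :=
    fun i => CochainComplex.of_d (fun p => ModuleCat.of A (kaehlerPowerPiece 𝒜 p n))
      (fun p => ModuleCat.ofHom (LinearMap.restrict (dEx p) (hdExdeg p n))) i
  have heqK : Homotopy.nullHomotopicMap' homK = 𝟙 K := by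
    apply HomologicalComplex.hom_ext
    intro i
    match i with
    | 0 =>
      rw [Homotopy.nullHomotopicMap'_f_of_not_rel_left
        (show (ComplexShape.down ℕ).Rel 1 0 from rfl)
        (fun l hl => (Nat.succ_ne_zero l (by exact hl)))]
      rw [HomologicalComplex.id_f]
      refine ModuleCat.hom_ext (LinearMap.ext fun x => ?_)
      show K.d 1 0 (homK 0 1 rfl x) = x
      rw [homK_app 0 rfl x, hdK 0]
      have hs : iD 0 (u • dEx 0 x.1) = u • iD 0 (dEx 0 x.1) :=
        map_smul ((iD 0).restrictScalars A) u (dEx 0 x.1)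
      refine Subtype.ext ?_
      show iD 0 (u • dEx 0 x.1) = x.1
      rw [hs, cartan_piece0 𝒜 δ hδ iD hiD dEx hdEx n x.2]
      exact key _ x.1
    | (i+1) =>
      rw [Homotopy.nullHomotopicMap'_f
        (show (ComplexShape.down ℕ).Rel (i+2) (i+1) from rfl)
        (show (ComplexShape.down ℕ).Rel (i+1) i from rfl)]
      rw [HomologicalComplex.id_f]
      refine ModuleCat.hom_ext (LinearMap.ext fun x => ?_)
      show homK i (i+1) rfl (K.d (i+1) i x) + K.d (i+2) (i+1) (homK (i+1) (i+2) rfl x) = x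
      rw [homK_app i rfl _, homK_app (i+1) rfl x, hdK i, hdK (i+1)]
      have hs : iD (i+1) (u • dEx (i+1) x.1) = u • iD (i+1) (dEx (i+1) x.1) :=
        map_smul ((iD (i+1)).restrictScalars A) u (dEx (i+1) x.1)
      refine Subtype.ext ?_
      show u • (dEx i (iD i x.1)) + iD (i+1) (u • dEx (i+1) x.1) = x.1
      have hfin : u • (dEx i (iD i x.1)) + u • (iD (i+1) (dEx (i+1) x.1)) = x.1 := by
        have h2 : u • (dEx i (iD i x.1)) + u • (iD (i+1) (dEx (i+1) x.1)) =
            u • ((dEx i (iD i x.1)) + (iD (i+1) (dEx (i+1) x.1))) :=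
          Subtype.ext (smul_add u ((dEx i (iD i x.1)) : ExteriorAlgebra B (Ω[B⁄A]))
            ((iD (i+1) (dEx (i+1) x.1)) : ExteriorAlgebra B (Ω[B⁄A]))).symm
        rw [h2, cartan_piece 𝒜 δ hδ iD hiD dEx hdEx n i x.2]
        exact key _ x.1
      rw [hs]
      exact hfin
  have heqC : Homotopy.nullHomotopicMap' homC = 𝟙 C := by
    apply HomologicalComplex.hom_ext
    intro i
    match i with
    | 0 =>
      rw [Homotopy.nullHomotopicMap'_f_of_not_rel_right
        (show (ComplexShape.up ℕ).Rel 0 1 from rfl)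
        (fun l hl => (Nat.succ_ne_zero l (by exact hl)))]
      rw [HomologicalComplex.id_f]
      refine ModuleCat.hom_ext (LinearMap.ext fun x => ?_)
      show homC 1 0 rfl (C.d 0 1 x) = x
      rw [hdC 0, homC_app 0 rfl _]
      refine Subtype.ext ?_
      show u • iD 0 (dEx 0 x.1) = x.1
      rw [cartan_piece0 𝒜 δ hδ iD hiD dEx hdEx n x.2]
      exact key _ x.1
    | (i+1) =>
      rw [Homotopy.nullHomotopicMap'_f
        (show (ComplexShape.up ℕ).Rel i (i+1) from rfl)
        (show (ComplexShape.up ℕ).Rel (i+1) (i+2) from rfl)]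
      rw [HomologicalComplex.id_f]
      refine ModuleCat.hom_ext (LinearMap.ext fun x => ?_)
      show homC (i+2) (i+1) rfl (C.d (i+1) (i+2) x) + C.d i (i+1) (homC (i+1) i rfl x) = x
      rw [hdC (i+1), hdC i, homC_app (i+1) rfl _, homC_app i rfl x]
      refine Subtype.ext ?_
      show u • iD (i+1) (dEx (i+1) x.1) + dEx i (u • iD i x.1) = x.1
      have hfin : u • iD (i+1) (dEx (i+1) x.1) + u • dEx i (iD i x.1) = x.1 := by
        have h2 : u • iD (i+1) (dEx (i+1) x.1) + u • dEx i (iD i x.1) =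
            u • ((dEx i (iD i x.1)) + (iD (i+1) (dEx (i+1) x.1))) :=
          Subtype.ext ((smul_add u ((iD (i+1) (dEx (i+1) x.1)) : ExteriorAlgebra B (Ω[B⁄A]))
            ((dEx i (iD i x.1)) : ExteriorAlgebra B (Ω[B⁄A]))).symm.trans
            (congrArg (fun z => u • z) (add_comm _ _)))
        rw [h2, cartan_piece 𝒜 δ hδ iD hiD dEx hdEx n i x.2]
        exact key _ x.1
      rw [map_smul (dEx i) u (iD i x.1)]
      exact hfin
  have hKhomot : Nonempty (Homotopy (𝟙 K) 0) := ⟨heqK ▸ Homotopy.nullHomotopy' homK⟩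
  have hChomot : Nonempty (Homotopy (𝟙 C) 0) := ⟨heqC ▸ Homotopy.nullHomotopy' homC⟩
  refine ⟨hKhomot, hChomot, ?_, ?_⟩
  · intro i
    rw [HomologicalComplex.exactAt_iff_isZero_homology, Limits.IsZero.iff_id_eq_zero]
    have := hKhomot.some.homologyMap_eq i
    rwa [HomologicalComplex.homologyMap_id, HomologicalComplex.homologyMap_zero] at this
  · intro i
    rw [HomologicalComplex.exactAt_iff_isZero_homology, Limits.IsZero.iff_id_eq_zero]
    have := hChomot.some.homologyMap_eq i
    rwa [HomologicalComplex.homologyMap_id, HomologicalComplex.homologyMap_zero] at this
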